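/- Let p be an odd prime and x, y, z pairwise coprime nonzero integers with x^p + y^p = z^p. Let θ be a prime satisfying Condition N-C for p, Condition p-N-p for p, and Condition N-p⁻¹ for p. Then one of the three numbers x + y, z − y, z − x is divisible by p^{2p−1}·θ^p. (Germain's Large Size of Solutions theorem, corrected with the additional hypothesis from her erratum.) -/

import Mathlib

open Finset

namespace GermainAux







/-- The cofactor sum `∑ a^i b^(p-1-i)`. -/
def G (p : ℕ) (a b : ℤ) : ℤ := ∑ i ∈ Finset.range p, a ^ i * b ^ (p - 1 - i)

lemma G_mul (p : ℕ) (a b : ℤ) : G p a b * (a - b) = a ^ p - b ^ p := geom_sum₂_mul a b p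

/-- Diagonal evaluation in any commutative ring. -/
lemma diag_sum {R : Type*} [CommRing R] (p : ℕ) (c : R) :
    ∑ i ∈ Finset.range p, c ^ i * c ^ (p - 1 - i) = (p : R) * c ^ (p - 1) := by
  rw [Finset.sum_congr rfl (fun i hi => ?_), Finset.sum_const, Finset.card_range,
    nsmul_eq_mul]
  rw [← pow_add]
  congr 1
  have : i < p := Finset.mem_range.mp hi
  omega

lemma zero_sum {R : Type*} [CommRing R] (p : ℕ) (hp : 0 < p) (c : R) :
    ∑ i ∈ Finset.range p, (0:R) ^ i * c ^ (p - 1 - i) = c ^ (p - 1) := by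
  rw [Finset.sum_eq_single 0]
  · simp
  · intro i _ hi
    rw [zero_pow hi, zero_mul]
  · intro h
    exact absurd (Finset.mem_range.mpr hp) h

lemma G_cast (n p : ℕ) (a b : ℤ) :
    ((G p a b : ℤ) : ZMod n) = ∑ i ∈ Finset.range p, (a : ZMod n) ^ i * (b : ZMod n) ^ (p - 1 - i) := by
  unfold G
  push_cast
  rfl

/-- `G p a b ≡ p * b^(p-1)` modulo `a - b`. -/
lemma G_mod (p : ℕ) (a b : ℤ) : a - b ∣ G p a b - (p : ℤ) * b ^ (p - 1) := by
  have h : G p a b - (p:ℤ) * b ^ (p-1) = ∑ i ∈ Finset.range p, (a ^ i - b ^ i) * b ^ (p - 1 - i) := by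
    rw [Finset.sum_congr rfl (fun i _ => sub_mul (a^i) (b^i) _), Finset.sum_sub_distrib]
    rw [← diag_sum p b]
    rfl
  rw [h]
  exact Finset.dvd_sum fun i _ => dvd_mul_of_dvd_left (sub_dvd_pow_sub_pow a b i) _


lemma pow_binom {R : Type*} [CommRing R] (b c : R) (hc : c * c = 0) (i : ℕ) :
    (b + c) ^ (i + 1) = b ^ (i + 1) + (i + 1 : ℕ) * b ^ i * c := by
  induction i with
  | zero => simp
  | succ i ih =>
    have h2 : (b + c) ^ (i + 2) = (b + c) * ((b + c) ^ (i + 1)) := by ring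
    rw [h2, ih]
    push_cast
    linear_combination ((i : R) + 1) * b ^ i * hc

lemma sum_shift {R : Type*} [CommRing R] (B C : R) (hC : C * C = 0) (m : ℕ) :
    ∑ i ∈ Finset.range (m+1), (B+C) ^ i * B ^ (m + 1 - 1 - i)
      = ((m+1 : ℕ) : R) * B ^ m + ((∑ i ∈ Finset.range m, (i+1) : ℕ) : R) * (C * B ^ (m-1)) := by
  simp only [Nat.add_sub_cancel]
  rw [Finset.sum_range_succ']
  have hterm : ∀ i ∈ Finset.range m,
      (B+C) ^ (i+1) * B ^ (m - (i+1)) = B ^ m + ((i+1 : ℕ) : R) * (C * B ^ (m-1)) := by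
    intro i hi
    have hilt : i < m := Finset.mem_range.mp hi
    have e1 : B^(i+1) * B^(m-(i+1)) = B^m := by rw [← pow_add]; congr 1; omega
    have e2 : B^i * B^(m-(i+1)) = B^(m-1) := by rw [← pow_add]; congr 1; omega
    rw [pow_binom B C hC i, add_mul, e1]
    congr 1
    calc ((i+1 : ℕ) : R) * B ^ i * C * B^(m-(i+1))
        = ((i+1 : ℕ) : R) * (C * (B^i * B^(m-(i+1)))) := by ring
      _ = ((i+1 : ℕ) : R) * (C * B^(m-1)) := by rw [e2]
  rw [Finset.sum_congr rfl hterm, Finset.sum_add_distrib, Finset.sum_const, Finset.card_range,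
    ← Finset.sum_mul, ← Nat.cast_sum]
  simp only [pow_zero, one_mul, Nat.sub_zero, nsmul_eq_mul]
  push_cast
  ring

lemma G_sq (p : ℕ) (hp : p.Prime) (hpodd : Odd p) (a b : ℤ) (h : (p:ℤ) ∣ a - b) :
    ((p:ℤ))^2 ∣ G p a b - (p : ℤ) * b ^ (p - 1) := by
  obtain ⟨d, hd⟩ := h
  have ha : a = b + (p:ℤ) * d := by linarith
  obtain ⟨k, hk⟩ := hpodd
  have hp1 : p - 1 + 1 = p := Nat.succ_pred_eq_of_pos hp.pos
  have hP2 : (p : ZMod (p^2))^2 = 0 := by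
    have := ZMod.natCast_self (p^2)
    push_cast at this
    exact this
  have hC : ((p : ZMod (p^2)) * (d : ZMod (p^2))) * ((p : ZMod (p^2)) * (d : ZMod (p^2))) = 0 := by
    linear_combination ((d : ZMod (p^2)) * (d : ZMod (p^2))) * hP2
  have haR : ((a : ℤ) : ZMod (p^2)) = (b : ZMod (p^2)) + (p : ZMod (p^2)) * (d : ZMod (p^2)) := by
    rw [ha]; push_cast; ring
  have hsum := sum_shift (b : ZMod (p^2)) ((p : ZMod (p^2)) * (d : ZMod (p^2))) hC (p-1)
  rw [hp1] at hsum
  have hS : (∑ i ∈ Finset.range (p-1), (i+1)) = p * k := by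
    have hT : (∑ i ∈ Finset.range (p-1), (i+1)) = ∑ i ∈ Finset.range (p-1+1), i := by
      rw [Finset.sum_range_succ']
      simp
    rw [hT, hp1]
    have h2 := Finset.sum_range_id_mul_two p
    set T := ∑ i ∈ Finset.range p, i
    have hpk : p * (p - 1) = 2 * (p * k) := by
      have h3 : p - 1 = 2 * k := by omega
      rw [h3]; ring
    omega
  have cast_eq : ((G p a b : ℤ) : ZMod (p^2)) = (p : ZMod (p^2)) * (b : ZMod (p^2)) ^ (p - 1) := by
    rw [G_cast, show ∀ n : ℕ, (∑ i ∈ Finset.range p, ((a:ℤ) : ZMod n) ^ i * ((b:ℤ) : ZMod n) ^ (p - 1 - i)) = ∑ i ∈ Finset.range p, (((b:ℤ) : ZMod n) + (p : ZMod n) * (d : ZMod n)) ^ i * ((b:ℤ) : ZMod n) ^ (p - 1 - i) from fun n => by rw [show ((a:ℤ) : ZMod n) = ((b:ℤ) : ZMod n) + (p : ZMod n) * (d : ZMod n) from by rw [ha]; push_cast; ring]]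
    rw [hsum, hS]
    have hzero : ((p * k : ℕ) : ZMod (p^2)) * ((p : ZMod (p^2)) * (d : ZMod (p^2)) * (b : ZMod (p^2))^(p-1-1)) = 0 := by
      push_cast
      linear_combination ((k : ZMod (p^2)) * (d : ZMod (p^2)) * (b : ZMod (p^2))^(p-1-1)) * hP2
    rw [hzero, add_zero]
  have hzero : ((G p a b - (p:ℤ) * b ^ (p - 1) : ℤ) : ZMod (p^2)) = 0 := by
    rw [Int.cast_sub, cast_eq]
    push_cast
    ring
  have hfin := (ZMod.intCast_zmod_eq_zero_iff_dvd _ (p^2)).mp hzero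
  push_cast at hfin
  exact_mod_cast hfin



/-- Every nonzero integer is a prime power times a coprime part. -/
lemma exists_pow_mul {q : ℤ} (hq : Prime q) : ∀ N : ℕ, ∀ n : ℤ, n.natAbs ≤ N → n ≠ 0 →
    ∃ (e : ℕ) (u : ℤ), n = q ^ e * u ∧ ¬ q ∣ u := by
  intro N
  induction N with
  | zero => intro n h1 h2; exfalso; exact h2 (Int.natAbs_eq_zero.mp (Nat.le_zero.mp h1))
  | succ N ih =>
    intro n h1 h2
    by_cases hd : q ∣ n
    · obtain ⟨m, hm⟩ := hd
      have hm0 : m ≠ 0 := by rintro rfl; simp at hm; exact h2 hm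
      have hq2 : 2 ≤ q.natAbs := (Int.prime_iff_natAbs_prime.mp hq).two_le
      have hlt : m.natAbs ≤ N := by
        have : n.natAbs = q.natAbs * m.natAbs := by rw [hm, Int.natAbs_mul]
        have hmpos : 1 ≤ m.natAbs := Nat.one_le_iff_ne_zero.mpr (Int.natAbs_ne_zero.mpr hm0)
        nlinarith [h1, this]
      obtain ⟨e, u, heu, hu⟩ := ih m hlt hm0
      exact ⟨e + 1, u, by rw [hm, heu]; ring, hu⟩
    · exact ⟨0, n, by simp, hd⟩

lemma exists_pow_mul' {q : ℤ} (hq : Prime q) (n : ℤ) (hn : n ≠ 0) :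
    ∃ (e : ℕ) (u : ℤ), n = q ^ e * u ∧ ¬ q ∣ u :=
  exists_pow_mul hq n.natAbs n le_rfl hn

lemma pow_mul_inj {q : ℤ} (hq : Prime q) {a b : ℕ} {A B : ℤ}
    (hA : ¬ q ∣ A) (hB : ¬ q ∣ B) (h : q ^ a * A = q ^ b * B) : a = b ∧ A = B := by
  have hq0 : q ≠ 0 := hq.ne_zero
  rcases le_total a b with hab | hab
  · obtain ⟨c, rfl⟩ := Nat.exists_eq_add_of_le hab
    rw [pow_add, mul_assoc] at h
    have hAB : A = q ^ c * B := by
      have := mul_left_cancel₀ (pow_ne_zero a hq0) h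
      exact this
    have hc : c = 0 := by
      by_contra hc0
      exact hA (hAB ▸ Dvd.dvd.mul_right (dvd_pow_self q hc0) B)
    subst hc
    simp at hAB
    exact ⟨by omega, hAB⟩
  · obtain ⟨c, rfl⟩ := Nat.exists_eq_add_of_le hab
    rw [pow_add, mul_assoc] at h
    have hBA : B = q ^ c * A := by
      have := mul_left_cancel₀ (pow_ne_zero b hq0) h.symm
      exact this
    have hc : c = 0 := by
      by_contra hc0
      exact hB (hBA ▸ Dvd.dvd.mul_right (dvd_pow_self q hc0) A)
    subst hc
    simp at hBA
    exact ⟨by omega, hBA.symm⟩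

lemma coprime_of_prime {a b : ℤ} (h : ∀ q : ℤ, Prime q → q ∣ a → q ∣ b → False) :
    IsCoprime a b := by
  by_contra hcon
  rw [Int.isCoprime_iff_gcd_eq_one] at hcon
  rcases Nat.eq_zero_or_pos (Int.gcd a b) with h0 | hpos
  · rw [Int.gcd_eq_zero_iff] at h0
    exact h 2 Int.prime_two (h0.1 ▸ dvd_zero 2) (h0.2 ▸ dvd_zero 2)
  · obtain ⟨q, hq, hqd⟩ := Nat.exists_prime_and_dvd hcon
    have hqa : (q:ℤ) ∣ a := dvd_trans (Int.natCast_dvd_natCast.mpr hqd) (Int.gcd_dvd_left a b)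
    have hqb : (q:ℤ) ∣ b := dvd_trans (Int.natCast_dvd_natCast.mpr hqd) (Int.gcd_dvd_right a b)
    exact h q (Nat.prime_iff_prime_int.mp hq) hqa hqb

/-- For an integer prime q, q ∣ (p:ℤ) with p prime implies (p:ℤ) ∣ whatever q divides. -/
lemma prime_dvd_natprime {q : ℤ} {p : ℕ} (hq : Prime q) (hp : p.Prime) (h : q ∣ (p:ℤ)) :
    ∀ {c : ℤ}, q ∣ c → (p:ℤ) ∣ c := by
  intro c hc
  have hassoc : Associated q (p:ℤ) :=
    (hq.associated_of_dvd (Nat.prime_iff_prime_int.mp hp) h)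
  exact hassoc.symm.dvd.trans hc



lemma flt_int (p : ℕ) (hp : p.Prime) (a : ℤ) : (p:ℤ) ∣ a ^ p - a := by
  haveI : Fact p.Prime := ⟨hp⟩
  have h0 : ((a ^ p - a : ℤ) : ZMod p) = 0 := by
    push_cast
    rw [ZMod.pow_card]
    ring
  exact_mod_cast (ZMod.intCast_zmod_eq_zero_iff_dvd _ p).mp h0

lemma cop_G' (p : ℕ) (hp : p.Prime) {a b D' G' : ℤ}
    (hD : D' ∣ a - b) (hG : G' ∣ G p a b) (h1 : ¬ (p:ℤ) ∣ D')
    (h2 : ∀ q : ℤ, Prime q → q ∣ a - b → q ∣ b → False) :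
    IsCoprime D' G' := by
  apply coprime_of_prime
  intro q hq hqD hqG
  have hqab : q ∣ a - b := hqD.trans hD
  have hqG2 : q ∣ G p a b := hqG.trans hG
  have hqpb : q ∣ (p:ℤ) * b ^ (p-1) := by
    have h3 : q ∣ G p a b - (p:ℤ)*b^(p-1) := hqab.trans (G_mod p a b)
    have h4 := dvd_sub hqG2 h3
    simpa using h4
  rcases hq.dvd_mul.mp hqpb with hqp | hqbp
  · exact h1 (prime_dvd_natprime hq hp hqp hqD)
  · exact h2 q hq hqab (hq.dvd_of_dvd_pow hqbp)

lemma decomp (p : ℕ) (hp : p.Prime) (hpodd : Odd p) {a b C : ℤ}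
    (heq : (a - b) * G p a b = C ^ p) (hC : C ≠ 0)
    (hab : (p:ℤ) ∣ a - b) (hb : ¬ (p:ℤ) ∣ b)
    (h2 : ∀ q : ℤ, Prime q → q ∣ a - b → q ∣ b → False) :
    ∃ (e' : ℕ) (v w : ℤ), C = (p:ℤ) ^ e' * v ∧ ¬ (p:ℤ) ∣ v ∧ 1 ≤ e' ∧
      w ^ p = (p:ℤ) * (a - b) ∧ (p:ℤ) ^ (p * e' - 1) ∣ a - b := by
  have hpZ : Prime (p:ℤ) := Nat.prime_iff_prime_int.mp hp
  have hD0 : a - b ≠ 0 := by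
    intro h0
    rw [h0, zero_mul] at heq
    exact hC ((pow_eq_zero_iff hp.pos.ne').mp heq.symm)
  obtain ⟨k, hk⟩ := G_sq p hp hpodd a b hab
  set G₁ : ℤ := b ^ (p-1) + (p:ℤ) * k with hG₁def
  have hG : G p a b = (p:ℤ) * G₁ := by rw [hG₁def]; rw [sq] at hk; linarith [hk]
  have hG₁ : ¬ (p:ℤ) ∣ G₁ := by
    intro hd
    have hbp : (p:ℤ) ∣ b^(p-1) := by
      have h5 : (p:ℤ) ∣ (p:ℤ) * k := Dvd.intro k rfl
      have h6 := dvd_sub hd h5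
      rw [hG₁def] at h6
      simpa using h6
    have : (p:ℤ) ∣ b := hpZ.dvd_of_dvd_pow hbp
    exact hb this
  obtain ⟨e, u, hD, hu⟩ := exists_pow_mul' hpZ (a-b) hD0
  obtain ⟨e', v, hCv, hv⟩ := exists_pow_mul' hpZ C hC
  have heq2 : (p:ℤ)^(e+1) * (u * G₁) = (p:ℤ)^(p*e') * v^p := by
    have h7 : ((p:ℤ)^e * u) * ((p:ℤ) * G₁) = ((p:ℤ)^e' * v)^p := by
      rw [← hD, ← hG, ← hCv]; exact heq
    calc (p:ℤ)^(e+1) * (u*G₁) = ((p:ℤ)^e * u) * ((p:ℤ) * G₁) := by ring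
      _ = ((p:ℤ)^e' * v)^p := h7
      _ = (p:ℤ)^(p*e') * v^p := by rw [mul_pow, ← pow_mul, mul_comm e' p]
  have hA : ¬ (p:ℤ) ∣ u * G₁ := by
    intro h8
    rcases hpZ.dvd_mul.mp h8 with h9 | h9
    exacts [hu h9, hG₁ h9]
  have hB : ¬ (p:ℤ) ∣ v^p := fun h8 => hv (hpZ.dvd_of_dvd_pow h8)
  obtain ⟨hee, huv⟩ := pow_mul_inj hpZ hA hB heq2
  have he'1 : 1 ≤ e' := by
    rcases Nat.eq_zero_or_pos e' with h9 | h9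
    · subst h9; simp at hee
    · exact h9
  have hcop : IsCoprime u G₁ :=
    cop_G' p hp (a := a) (b := b) ⟨(p:ℤ)^e, by rw [hD]; ring⟩ ⟨(p:ℤ), by rw [hG]; ring⟩ hu h2
  obtain ⟨r, hr⟩ := Int.eq_pow_of_mul_eq_pow_odd_left hcop hpodd huv
  refine ⟨e', v, (p:ℤ)^e' * r, hCv, hv, he'1, ?_, ?_⟩
  · calc ((p:ℤ)^e' * r)^p = (p:ℤ)^(p*e') * r^p := by rw [mul_pow, ← pow_mul, mul_comm e' p]
      _ = (p:ℤ)^(e+1) * u := by rw [← hee, hr]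
      _ = (p:ℤ) * (a-b) := by rw [hD]; ring
  · have h10 : p*e' - 1 = e := by omega
    rw [h10, hD]
    exact ⟨u, rfl⟩

lemma not_dvd_of_coprime {θ : ℕ} (hθ : θ.Prime) {a c : ℤ} (hac : IsCoprime a c)
    (h : (θ:ℤ) ∣ c) : ¬ (θ:ℤ) ∣ a :=
  fun ha => (Nat.prime_iff_prime_int.mp hθ).not_unit (hac.isUnit_of_dvd' ha h)

lemma not_dvd_int_of_coprime {p : ℕ} (hp : p.Prime) {a c : ℤ} (hac : IsCoprime a c)
    (h : (p:ℤ) ∣ c) : ¬ (p:ℤ) ∣ a :=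
  fun ha => (Nat.prime_iff_prime_int.mp hp).not_unit (hac.isUnit_of_dvd' ha h)

/-- master equation 1 : `(x+y) * G p x (-y) = z^p` -/
lemma master1 (p : ℕ) (hpodd : Odd p) (x y z : ℤ) (hfermat : x ^ p + y ^ p = z ^ p) :
    (x + y) * G p x (-y) = z ^ p := by
  have h := G_mul p x (-y)
  rw [Odd.neg_pow hpodd, sub_neg_eq_add] at h
  linear_combination h + hfermat

/-- master equation 2 : `(z-y) * G p z y = x^p` -/
lemma master2 (p : ℕ) (x y z : ℤ) (hfermat : x ^ p + y ^ p = z ^ p) :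
    (z - y) * G p z y = x ^ p := by
  have h := G_mul p z y
  linear_combination h - hfermat

/-- master equation 3 : `(z-x) * G p z x = y^p` -/
lemma master3 (p : ℕ) (x y z : ℤ) (hfermat : x ^ p + y ^ p = z ^ p) :
    (z - x) * G p z x = y ^ p := by
  have h := G_mul p z x
  linear_combination h - hfermat

lemma T1px (p θ : ℕ) (hp : p.Prime) (hpodd : Odd p) (hθ : θ.Prime) (hθp : θ ≠ p)
    (x y z : ℤ) (hx : x ≠ 0) (hy : y ≠ 0) (hz : z ≠ 0)
    (hxy : IsCoprime x y) (hyz : IsCoprime y z) (hxz : IsCoprime x z)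
    (hfermat : x ^ p + y ^ p = z ^ p)
    (hNpinv : ∀ a b : ZMod θ, a ≠ 0 → b ≠ 0 → (p : ZMod θ) * (a ^ p - b ^ p) ≠ 1)
    (hθz : (θ:ℤ) ∣ z) (hθxy : ¬ (θ:ℤ) ∣ x + y) (hpx : (p:ℤ) ∣ x) : False := by
  haveI : Fact θ.Prime := ⟨hθ⟩
  have hpZ : Prime (p:ℤ) := Nat.prime_iff_prime_int.mp hp
  have hθZ : Prime (θ:ℤ) := Nat.prime_iff_prime_int.mp hθ
  -- θ does not divide x, y
  have hθx : ¬ (θ:ℤ) ∣ x := not_dvd_of_coprime hθ hxz hθz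
  have hθy : ¬ (θ:ℤ) ∣ y := not_dvd_of_coprime hθ hyz hθz
  -- p does not divide y, z
  have hpy : ¬ (p:ℤ) ∣ y := not_dvd_int_of_coprime hp hxy.symm hpx
  have hpz : ¬ (p:ℤ) ∣ z := not_dvd_int_of_coprime hp hxz.symm hpx
  -- p ∣ z - y
  have hab : (p:ℤ) ∣ z - y := by
    obtain ⟨a1, e1⟩ := flt_int p hp z
    obtain ⟨a2, e2⟩ := flt_int p hp y
    obtain ⟨a3, e3⟩ := dvd_pow hpx hp.pos.ne' (n := p)
    exact ⟨a3 - a1 + a2, by linarith⟩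
  -- extraction: x + y = r^p
  have hEz := master1 p hpodd x y z hfermat
  have hEx := master2 p x y z hfermat
  have hEy := master3 p x y z hfermat
  have hpxy : ¬ (p:ℤ) ∣ x + y := by
    intro h
    obtain ⟨a1, e1⟩ := h
    obtain ⟨a2, e2⟩ := hpx
    exact hpy ⟨a1 - a2, by linarith⟩
  have hcop1 : IsCoprime (x + y) (G p x (-y)) := by
    apply cop_G' p hp (a := x) (b := -y) (by rw [sub_neg_eq_add]) dvd_rfl hpxy
    intro q hq h1 h2
    rw [sub_neg_eq_add] at h1
    have hqy : q ∣ y := (dvd_neg).mp h2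
    have hqx : q ∣ x := by obtain ⟨c1, e1⟩ := h1; obtain ⟨c2, e2⟩ := hqy; exact ⟨c1 - c2, by linarith⟩
    exact hq.not_unit (hxy.isUnit_of_dvd' hqx hqy)
  obtain ⟨r, hr⟩ := Int.eq_pow_of_mul_eq_pow_odd_left hcop1 hpodd hEz
  -- extraction: z - x = t^p
  have hpzx : ¬ (p:ℤ) ∣ z - x := by
    intro h
    obtain ⟨a1, e1⟩ := h
    obtain ⟨a2, e2⟩ := hpx
    exact hpz ⟨a1 + a2, by linarith⟩
  have hcop2 : IsCoprime (z - x) (G p z x) := by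
    apply cop_G' p hp dvd_rfl dvd_rfl hpzx
    intro q hq h1 h2
    have hqz : q ∣ z := by obtain ⟨c1, e1⟩ := h1; obtain ⟨c2, e2⟩ := h2; exact ⟨c1 + c2, by linarith⟩
    exact hq.not_unit (hxz.isUnit_of_dvd' h2 hqz)
  obtain ⟨t, ht⟩ := Int.eq_pow_of_mul_eq_pow_odd_left hcop2 hpodd hEy
  -- decomposition of z - y
  have h2zy : ∀ q : ℤ, Prime q → q ∣ z - y → q ∣ y → False := by
    intro q hq h1 h2
    have hqz : q ∣ z := by obtain ⟨c1, e1⟩ := h1; obtain ⟨c2, e2⟩ := h2; exact ⟨c1 + c2, by linarith⟩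
    exact hq.not_unit (hyz.isUnit_of_dvd' h2 hqz)
  obtain ⟨e', v, w, hCv, hv, he'1, hw, hpow⟩ := decomp p hp hpodd hEx hx hab hpy h2zy
  -- now work in ZMod θ
  set K := ZMod θ
  have hZ0 : ((z : ℤ) : K) = 0 := (ZMod.intCast_zmod_eq_zero_iff_dvd z θ).mpr hθz
  have hX0 : ((x : ℤ) : K) ≠ 0 := fun h => hθx ((ZMod.intCast_zmod_eq_zero_iff_dvd x θ).mp h)
  have hY0 : ((y : ℤ) : K) ≠ 0 := fun h => hθy ((ZMod.intCast_zmod_eq_zero_iff_dvd y θ).mp h)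
  have hXY0 : ((x : ℤ) : K) + ((y : ℤ) : K) ≠ 0 := by
    intro h
    apply hθxy
    apply (ZMod.intCast_zmod_eq_zero_iff_dvd (x+y) θ).mp
    push_cast
    exact h
  have hP0 : ((p : ℕ) : K) ≠ 0 := by
    intro h
    have := (ZMod.natCast_eq_zero_iff p θ).mp h
    rcases (Nat.prime_dvd_prime_iff_eq hθ hp).mp this with rfl
    exact hθp rfl
  -- casts of the power relations
  have hRcast : ((r : ℤ) : K) ^ p = ((x : ℤ) : K) + ((y : ℤ) : K) := by
    have : ((x + y : ℤ) : K) = ((r ^ p : ℤ) : K) := by rw [hr]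
    push_cast at this
    exact this.symm
  have hTcast : ((t : ℤ) : K) ^ p = -((x : ℤ) : K) := by
    have : ((z - x : ℤ) : K) = ((t ^ p : ℤ) : K) := by rw [ht]
    push_cast at this
    rw [← this, hZ0]
    ring
  have hWcast : ((w : ℤ) : K) ^ p = -((p:ℕ) : K) * ((y : ℤ) : K) := by
    have : (((p:ℕ) * (z - y) : ℤ) : K) = ((w ^ p : ℤ) : K) := by rw [hw]
    push_cast at this
    rw [← this, hZ0]
    ring
  -- w ≠ 0 in K
  have hWne : ((w : ℤ) : K) ≠ 0 := by
    intro h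
    have h2 : ((w : ℤ) : K) ^ p = 0 := by rw [h]; exact zero_pow hp.pos.ne'
    rw [hWcast] at h2
    rcases mul_eq_zero.mp h2 with h3 | h3
    · exact hP0 (by simpa using h3)
    · exact hY0 h3
  have hRne : ((r : ℤ) : K) ≠ 0 := by
    intro h
    apply hXY0
    rw [← hRcast, h, zero_pow hp.pos.ne']
  have hTne : ((t : ℤ) : K) ≠ 0 := by
    intro h
    apply hX0
    have : ((t : ℤ) : K) ^ p = 0 := by rw [h]; exact zero_pow hp.pos.ne'
    rw [hTcast] at this
    exact neg_eq_zero.mp this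
  -- contradiction with N-p⁻¹
  apply hNpinv (-((r : ℤ) : K) * ((w : ℤ) : K)⁻¹) (((t : ℤ) : K) * ((w : ℤ) : K)⁻¹)
    (mul_ne_zero (neg_ne_zero.mpr hRne) (inv_ne_zero hWne))
    (mul_ne_zero hTne (inv_ne_zero hWne))
  calc ((p:ℕ) : K) * ((-((r : ℤ) : K) * ((w : ℤ) : K)⁻¹) ^ p - (((t : ℤ) : K) * ((w : ℤ) : K)⁻¹) ^ p)
      = (((p:ℕ) : K) * ((-((r : ℤ) : K)) ^ p - ((t : ℤ) : K) ^ p)) * (((w : ℤ) : K)⁻¹) ^ p := by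
        ring
    _ = ((w : ℤ) : K) ^ p * (((w : ℤ) : K)⁻¹) ^ p := by
        rw [Odd.neg_pow hpodd, hRcast, hTcast, hWcast]; ring
    _ = 1 := by rw [← mul_pow, mul_inv_cancel₀ hWne, one_pow]


lemma T1pz (p θ : ℕ) (hp : p.Prime) (hpodd : Odd p) (hθ : θ.Prime) (hθp : θ ≠ p)
    (x y z : ℤ) (hx : x ≠ 0) (hy : y ≠ 0) (hz : z ≠ 0)
    (hxy : IsCoprime x y) (hyz : IsCoprime y z) (hxz : IsCoprime x z)
    (hfermat : x ^ p + y ^ p = z ^ p)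
    (hNpinv : ∀ a b : ZMod θ, a ≠ 0 → b ≠ 0 → (p : ZMod θ) * (a ^ p - b ^ p) ≠ 1)
    (hθz : (θ:ℤ) ∣ z) (hθxy : ¬ (θ:ℤ) ∣ x + y) (hpz : (p:ℤ) ∣ z) : False := by
  haveI : Fact θ.Prime := ⟨hθ⟩
  have hpZ : Prime (p:ℤ) := Nat.prime_iff_prime_int.mp hp
  have hθx : ¬ (θ:ℤ) ∣ x := not_dvd_of_coprime hθ hxz hθz
  have hθy : ¬ (θ:ℤ) ∣ y := not_dvd_of_coprime hθ hyz hθz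
  have hpx : ¬ (p:ℤ) ∣ x := not_dvd_of_coprime hp hxz hpz
  have hpy : ¬ (p:ℤ) ∣ y := not_dvd_of_coprime hp hyz hpz
  have hEz := master1 p hpodd x y z hfermat
  have hEx := master2 p x y z hfermat
  have hEy := master3 p x y z hfermat
  -- p ∣ x + y
  have hab : (p:ℤ) ∣ x - -y := by
    rw [sub_neg_eq_add]
    obtain ⟨a1, e1⟩ := flt_int p hp x
    obtain ⟨a2, e2⟩ := flt_int p hp y
    obtain ⟨a3, e3⟩ := dvd_pow hpz hp.pos.ne' (n := p)
    exact ⟨a3 - a1 - a2, by linarith⟩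
  have h2xy : ∀ q : ℤ, Prime q → q ∣ x - -y → q ∣ -y → False := by
    intro q hq h1 h2
    rw [sub_neg_eq_add] at h1
    have hqy : q ∣ y := (dvd_neg).mp h2
    have hqx : q ∣ x := by obtain ⟨c1, e1⟩ := h1; obtain ⟨c2, e2⟩ := hqy; exact ⟨c1 - c2, by linarith⟩
    exact hq.not_unit (hxy.isUnit_of_dvd' hqx hqy)
  have hEz' : (x - -y) * G p x (-y) = z ^ p := by rw [sub_neg_eq_add]; exact hEz
  have hpy' : ¬ (p:ℤ) ∣ -y := fun h => hpy (dvd_neg.mp h)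
  obtain ⟨e', v, w, hCv, hv, he'1, hw, hpow⟩ := decomp p hp hpodd hEz' hz hab hpy' h2xy
  rw [sub_neg_eq_add] at hw
  -- extractions s, t
  have hpzy : ¬ (p:ℤ) ∣ z - y := by
    intro h
    obtain ⟨a1, e1⟩ := h
    obtain ⟨a2, e2⟩ := hpz
    exact hpy ⟨a2 - a1, by linarith⟩
  have h2zy : ∀ q : ℤ, Prime q → q ∣ z - y → q ∣ y → False := by
    intro q hq h1 h2
    have hqz : q ∣ z := by obtain ⟨c1, e1⟩ := h1; obtain ⟨c2, e2⟩ := h2; exact ⟨c1 + c2, by linarith⟩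
    exact hq.not_unit (hyz.isUnit_of_dvd' h2 hqz)
  have hcop2 : IsCoprime (z - y) (G p z y) := cop_G' p hp dvd_rfl dvd_rfl hpzy h2zy
  obtain ⟨s, hs⟩ := Int.eq_pow_of_mul_eq_pow_odd_left hcop2 hpodd hEx
  have hpzx : ¬ (p:ℤ) ∣ z - x := by
    intro h
    obtain ⟨a1, e1⟩ := h
    obtain ⟨a2, e2⟩ := hpz
    exact hpx ⟨a2 - a1, by linarith⟩
  have h2zx : ∀ q : ℤ, Prime q → q ∣ z - x → q ∣ x → False := by
    intro q hq h1 h2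
    have hqz : q ∣ z := by obtain ⟨c1, e1⟩ := h1; obtain ⟨c2, e2⟩ := h2; exact ⟨c1 + c2, by linarith⟩
    exact hq.not_unit (hxz.isUnit_of_dvd' h2 hqz)
  have hcop3 : IsCoprime (z - x) (G p z x) := cop_G' p hp dvd_rfl dvd_rfl hpzx h2zx
  obtain ⟨t, ht⟩ := Int.eq_pow_of_mul_eq_pow_odd_left hcop3 hpodd hEy
  -- ZMod θ
  set K := ZMod θ
  have hZ0 : ((z : ℤ) : K) = 0 := (ZMod.intCast_zmod_eq_zero_iff_dvd z θ).mpr hθz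
  have hX0 : ((x : ℤ) : K) ≠ 0 := fun h => hθx ((ZMod.intCast_zmod_eq_zero_iff_dvd x θ).mp h)
  have hY0 : ((y : ℤ) : K) ≠ 0 := fun h => hθy ((ZMod.intCast_zmod_eq_zero_iff_dvd y θ).mp h)
  have hXY0 : ((x : ℤ) : K) + ((y : ℤ) : K) ≠ 0 := by
    intro h
    apply hθxy
    apply (ZMod.intCast_zmod_eq_zero_iff_dvd (x+y) θ).mp
    push_cast
    exact h
  have hP0 : ((p : ℕ) : K) ≠ 0 := by
    intro h
    have := (ZMod.natCast_eq_zero_iff p θ).mp h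
    rcases (Nat.prime_dvd_prime_iff_eq hθ hp).mp this with rfl
    exact hθp rfl
  have hScast : ((s : ℤ) : K) ^ p = -((y : ℤ) : K) := by
    have h1 : ((z - y : ℤ) : K) = ((s ^ p : ℤ) : K) := by rw [hs]
    push_cast at h1
    rw [← h1, hZ0]; ring
  have hTcast : ((t : ℤ) : K) ^ p = -((x : ℤ) : K) := by
    have h1 : ((z - x : ℤ) : K) = ((t ^ p : ℤ) : K) := by rw [ht]
    push_cast at h1
    rw [← h1, hZ0]; ring
  have hWcast : ((w : ℤ) : K) ^ p = ((p:ℕ) : K) * (((x : ℤ) : K) + ((y : ℤ) : K)) := by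
    have h1 : (((p:ℕ) * (x + y) : ℤ) : K) = ((w ^ p : ℤ) : K) := by rw [hw]
    push_cast at h1
    rw [← h1]
  have hWne : ((w : ℤ) : K) ≠ 0 := by
    intro h
    have h2 : ((w : ℤ) : K) ^ p = 0 := by rw [h]; exact zero_pow hp.pos.ne'
    rw [hWcast] at h2
    rcases mul_eq_zero.mp h2 with h3 | h3
    · exact hP0 h3
    · exact hXY0 h3
  have hSne : ((s : ℤ) : K) ≠ 0 := by
    intro h
    apply hY0
    have h2 : ((s : ℤ) : K) ^ p = 0 := by rw [h]; exact zero_pow hp.pos.ne'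
    rw [hScast] at h2
    exact neg_eq_zero.mp h2
  have hTne : ((t : ℤ) : K) ≠ 0 := by
    intro h
    apply hX0
    have h2 : ((t : ℤ) : K) ^ p = 0 := by rw [h]; exact zero_pow hp.pos.ne'
    rw [hTcast] at h2
    exact neg_eq_zero.mp h2
  apply hNpinv (-((s : ℤ) : K) * ((w : ℤ) : K)⁻¹) (((t : ℤ) : K) * ((w : ℤ) : K)⁻¹)
    (mul_ne_zero (neg_ne_zero.mpr hSne) (inv_ne_zero hWne))
    (mul_ne_zero hTne (inv_ne_zero hWne))
  calc ((p:ℕ) : K) * ((-((s : ℤ) : K) * ((w : ℤ) : K)⁻¹) ^ p - (((t : ℤ) : K) * ((w : ℤ) : K)⁻¹) ^ p)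
      = (((p:ℕ) : K) * ((-((s : ℤ) : K)) ^ p - ((t : ℤ) : K) ^ p)) * (((w : ℤ) : K)⁻¹) ^ p := by
        ring
    _ = ((w : ℤ) : K) ^ p * (((w : ℤ) : K)⁻¹) ^ p := by
        rw [Odd.neg_pow hpodd, hScast, hTcast, hWcast]; ring
    _ = 1 := by rw [← mul_pow, mul_inv_cancel₀ hWne, one_pow]

lemma T1none (p θ : ℕ) (hp : p.Prime) (hpodd : Odd p) (hθ : θ.Prime) (hθp : θ ≠ p)
    (x y z : ℤ) (hx : x ≠ 0) (hy : y ≠ 0) (hz : z ≠ 0)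
    (hxy : IsCoprime x y) (hyz : IsCoprime y z) (hxz : IsCoprime x z)
    (hfermat : x ^ p + y ^ p = z ^ p)
    (hNC : ∀ a b : ZMod θ, a ≠ 0 → b ≠ 0 → b ^ p ≠ a ^ p + 1)
    (hθz : (θ:ℤ) ∣ z) (hθxy : ¬ (θ:ℤ) ∣ x + y)
    (hpx : ¬ (p:ℤ) ∣ x) (hpy : ¬ (p:ℤ) ∣ y) (hpz : ¬ (p:ℤ) ∣ z) : False := by
  haveI : Fact θ.Prime := ⟨hθ⟩
  have hθx : ¬ (θ:ℤ) ∣ x := not_dvd_of_coprime hθ hxz hθz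
  have hθy : ¬ (θ:ℤ) ∣ y := not_dvd_of_coprime hθ hyz hθz
  have hEz := master1 p hpodd x y z hfermat
  have hEx := master2 p x y z hfermat
  have hEy := master3 p x y z hfermat
  -- extractions r, s, t
  have hpxy : ¬ (p:ℤ) ∣ x + y := by
    intro h
    have h2 : (p:ℤ) ∣ z ^ p := hEz ▸ Dvd.dvd.mul_right h _
    exact hpz ((Nat.prime_iff_prime_int.mp hp).dvd_of_dvd_pow h2)
  have hcop1 : IsCoprime (x + y) (G p x (-y)) := by
    apply cop_G' p hp (a := x) (b := -y) (by rw [sub_neg_eq_add]) dvd_rfl hpxy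
    intro q hq h1 h2
    rw [sub_neg_eq_add] at h1
    have hqy : q ∣ y := (dvd_neg).mp h2
    have hqx : q ∣ x := by obtain ⟨c1, e1⟩ := h1; obtain ⟨c2, e2⟩ := hqy; exact ⟨c1 - c2, by linarith⟩
    exact hq.not_unit (hxy.isUnit_of_dvd' hqx hqy)
  obtain ⟨r, hr⟩ := Int.eq_pow_of_mul_eq_pow_odd_left hcop1 hpodd hEz
  have hpzy : ¬ (p:ℤ) ∣ z - y := by
    intro h
    have h2 : (p:ℤ) ∣ x ^ p := hEx ▸ Dvd.dvd.mul_right h _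
    exact hpx ((Nat.prime_iff_prime_int.mp hp).dvd_of_dvd_pow h2)
  have h2zy : ∀ q : ℤ, Prime q → q ∣ z - y → q ∣ y → False := by
    intro q hq h1 h2
    have hqz : q ∣ z := by obtain ⟨c1, e1⟩ := h1; obtain ⟨c2, e2⟩ := h2; exact ⟨c1 + c2, by linarith⟩
    exact hq.not_unit (hyz.isUnit_of_dvd' h2 hqz)
  have hcop2 : IsCoprime (z - y) (G p z y) := cop_G' p hp dvd_rfl dvd_rfl hpzy h2zy
  obtain ⟨s, hs⟩ := Int.eq_pow_of_mul_eq_pow_odd_left hcop2 hpodd hEx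
  have hpzx : ¬ (p:ℤ) ∣ z - x := by
    intro h
    have h2 : (p:ℤ) ∣ y ^ p := hEy ▸ Dvd.dvd.mul_right h _
    exact hpy ((Nat.prime_iff_prime_int.mp hp).dvd_of_dvd_pow h2)
  have h2zx : ∀ q : ℤ, Prime q → q ∣ z - x → q ∣ x → False := by
    intro q hq h1 h2
    have hqz : q ∣ z := by obtain ⟨c1, e1⟩ := h1; obtain ⟨c2, e2⟩ := h2; exact ⟨c1 + c2, by linarith⟩
    exact hq.not_unit (hxz.isUnit_of_dvd' h2 hqz)
  have hcop3 : IsCoprime (z - x) (G p z x) := cop_G' p hp dvd_rfl dvd_rfl hpzx h2zx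
  obtain ⟨t, ht⟩ := Int.eq_pow_of_mul_eq_pow_odd_left hcop3 hpodd hEy
  -- ZMod θ
  set K := ZMod θ
  have hZ0 : ((z : ℤ) : K) = 0 := (ZMod.intCast_zmod_eq_zero_iff_dvd z θ).mpr hθz
  have hX0 : ((x : ℤ) : K) ≠ 0 := fun h => hθx ((ZMod.intCast_zmod_eq_zero_iff_dvd x θ).mp h)
  have hY0 : ((y : ℤ) : K) ≠ 0 := fun h => hθy ((ZMod.intCast_zmod_eq_zero_iff_dvd y θ).mp h)
  have hXY0 : ((x : ℤ) : K) + ((y : ℤ) : K) ≠ 0 := by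
    intro h
    apply hθxy
    apply (ZMod.intCast_zmod_eq_zero_iff_dvd (x+y) θ).mp
    push_cast
    exact h
  have hRcast : ((r : ℤ) : K) ^ p = ((x : ℤ) : K) + ((y : ℤ) : K) := by
    have h1 : ((x + y : ℤ) : K) = ((r ^ p : ℤ) : K) := by rw [hr]
    push_cast at h1
    exact h1.symm
  have hScast : ((s : ℤ) : K) ^ p = -((y : ℤ) : K) := by
    have h1 : ((z - y : ℤ) : K) = ((s ^ p : ℤ) : K) := by rw [hs]
    push_cast at h1
    rw [← h1, hZ0]; ring
  have hTcast : ((t : ℤ) : K) ^ p = -((x : ℤ) : K) := by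
    have h1 : ((z - x : ℤ) : K) = ((t ^ p : ℤ) : K) := by rw [ht]
    push_cast at h1
    rw [← h1, hZ0]; ring
  have hSne : ((s : ℤ) : K) ≠ 0 := by
    intro h
    apply hY0
    have h2 : ((s : ℤ) : K) ^ p = 0 := by rw [h]; exact zero_pow hp.pos.ne'
    rw [hScast] at h2
    exact neg_eq_zero.mp h2
  have hTne : ((t : ℤ) : K) ≠ 0 := by
    intro h
    apply hX0
    have h2 : ((t : ℤ) : K) ^ p = 0 := by rw [h]; exact zero_pow hp.pos.ne'
    rw [hTcast] at h2
    exact neg_eq_zero.mp h2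
  have hRne : ((r : ℤ) : K) ≠ 0 := by
    intro h
    apply hXY0
    rw [← hRcast, h, zero_pow hp.pos.ne']
  -- NC contradiction with a = r/s, b = -t/s
  apply hNC (((r : ℤ) : K) * ((s : ℤ) : K)⁻¹) (-((t : ℤ) : K) * ((s : ℤ) : K)⁻¹)
    (mul_ne_zero hRne (inv_ne_zero hSne))
    (mul_ne_zero (neg_ne_zero.mpr hTne) (inv_ne_zero hSne))
  have hone : ((s : ℤ) : K) ^ p * (((s : ℤ) : K)⁻¹) ^ p = 1 := by
    rw [← mul_pow, mul_inv_cancel₀ hSne, one_pow]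
  calc (-((t : ℤ) : K) * ((s : ℤ) : K)⁻¹) ^ p
      = (-((t : ℤ) : K)) ^ p * (((s : ℤ) : K)⁻¹) ^ p := by ring
    _ = ((x : ℤ) : K) * (((s : ℤ) : K)⁻¹) ^ p := by
        rw [Odd.neg_pow hpodd, hTcast]; ring
    _ = (((x : ℤ) : K) + ((y : ℤ) : K)) * (((s : ℤ) : K)⁻¹) ^ p
          + ((s : ℤ) : K) ^ p * (((s : ℤ) : K)⁻¹) ^ p := by
        rw [hScast]; ring
    _ = (((r : ℤ) : K) * ((s : ℤ) : K)⁻¹) ^ p + 1 := by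
        rw [hone, ← hRcast]; ring

lemma T2aux (p θ : ℕ) (hp : p.Prime) (hpodd : Odd p) (hθ : θ.Prime) (hθp : θ ≠ p)
    (x y z : ℤ) (hx : x ≠ 0) (hy : y ≠ 0) (hz : z ≠ 0)
    (hxy : IsCoprime x y) (hyz : IsCoprime y z) (hxz : IsCoprime x z)
    (hfermat : x ^ p + y ^ p = z ^ p)
    (hpNp : ∀ c : ZMod θ, c ^ p ≠ (p : ZMod θ))
    (hθz : (θ:ℤ) ∣ z) (hθxy : (θ:ℤ) ∣ x + y)
    (hpy : ¬ (p:ℤ) ∣ y) (hpz : ¬ (p:ℤ) ∣ z) : False := by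
  haveI : Fact θ.Prime := ⟨hθ⟩
  have hθx : ¬ (θ:ℤ) ∣ x := not_dvd_of_coprime hθ hxz hθz
  have hEz := master1 p hpodd x y z hfermat
  have hEy := master3 p x y z hfermat
  -- extraction f₁ : G p x (-y) = f₁ ^ p
  have hpxy : ¬ (p:ℤ) ∣ x + y := by
    intro h
    have h2 : (p:ℤ) ∣ z ^ p := hEz ▸ Dvd.dvd.mul_right h _
    exact hpz ((Nat.prime_iff_prime_int.mp hp).dvd_of_dvd_pow h2)
  have hcop1 : IsCoprime (x + y) (G p x (-y)) := by
    apply cop_G' p hp (a := x) (b := -y) (by rw [sub_neg_eq_add]) dvd_rfl hpxy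
    intro q hq h1 h2
    rw [sub_neg_eq_add] at h1
    have hqy : q ∣ y := (dvd_neg).mp h2
    have hqx : q ∣ x := by obtain ⟨c1, e1⟩ := h1; obtain ⟨c2, e2⟩ := hqy; exact ⟨c1 - c2, by linarith⟩
    exact hq.not_unit (hxy.isUnit_of_dvd' hqx hqy)
  obtain ⟨f₁, hf₁⟩ := Int.eq_pow_of_mul_eq_pow_odd_right hcop1 hpodd hEz
  -- extraction h₁ : G p z x = h₁ ^ p
  have hpzx : ¬ (p:ℤ) ∣ z - x := by
    intro h
    have h2 : (p:ℤ) ∣ y ^ p := hEy ▸ Dvd.dvd.mul_right h _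
    exact hpy ((Nat.prime_iff_prime_int.mp hp).dvd_of_dvd_pow h2)
  have hcop3 : IsCoprime (z - x) (G p z x) := by
    apply cop_G' p hp dvd_rfl dvd_rfl hpzx
    intro q hq h1 h2
    have hqz : q ∣ z := by obtain ⟨c1, e1⟩ := h1; obtain ⟨c2, e2⟩ := h2; exact ⟨c1 + c2, by linarith⟩
    exact hq.not_unit (hxz.isUnit_of_dvd' h2 hqz)
  obtain ⟨h₁, hh₁⟩ := Int.eq_pow_of_mul_eq_pow_odd_right hcop3 hpodd hEy
  -- ZMod θ
  set K := ZMod θ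
  have hZ0 : ((z : ℤ) : K) = 0 := (ZMod.intCast_zmod_eq_zero_iff_dvd z θ).mpr hθz
  have hX0 : ((x : ℤ) : K) ≠ 0 := fun h => hθx ((ZMod.intCast_zmod_eq_zero_iff_dvd x θ).mp h)
  have hYX : ((y : ℤ) : K) = -((x : ℤ) : K) := by
    have h1 : ((x + y : ℤ) : K) = 0 := (ZMod.intCast_zmod_eq_zero_iff_dvd (x+y) θ).mpr hθxy
    push_cast at h1
    linear_combination h1
  -- casts
  have hF : ((f₁ : ℤ) : K) ^ p = ((p:ℕ) : K) * ((x : ℤ) : K) ^ (p-1) := by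
    have h1 : ((G p x (-y) : ℤ) : K) = ((f₁ ^ p : ℤ) : K) := by rw [hf₁]
    rw [G_cast] at h1
    push_cast at h1
    rw [hYX] at h1
    simp only [neg_neg] at h1
    rw [diag_sum] at h1
    push_cast
    exact h1.symm
  have hH : ((h₁ : ℤ) : K) ^ p = ((x : ℤ) : K) ^ (p-1) := by
    have h1 : ((G p z x : ℤ) : K) = ((h₁ ^ p : ℤ) : K) := by rw [hh₁]
    rw [G_cast] at h1
    rw [hZ0, zero_sum p hp.pos] at h1
    push_cast at h1
    exact h1.symm
  have hXp : ((x : ℤ) : K) ^ (p-1) ≠ 0 := pow_ne_zero _ hX0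
  have hHne : ((h₁ : ℤ) : K) ≠ 0 := by
    intro h
    apply hXp
    rw [← hH, h, zero_pow hp.pos.ne']
  apply hpNp (((f₁ : ℤ) : K) * ((h₁ : ℤ) : K)⁻¹)
  calc (((f₁ : ℤ) : K) * ((h₁ : ℤ) : K)⁻¹) ^ p
      = ((f₁ : ℤ) : K) ^ p * (((h₁ : ℤ) : K) ^ p)⁻¹ := by rw [mul_pow, inv_pow]
    _ = ((p:ℕ) : K) * (((x : ℤ) : K) ^ (p-1) * (((x : ℤ) : K) ^ (p-1))⁻¹) := by
        rw [hF, hH]; ring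
    _ = ((p:ℕ) : K) := by rw [mul_inv_cancel₀ hXp, mul_one]



lemma key (p θ : ℕ) (hp : p.Prime) (hpodd : Odd p) (hθ : θ.Prime) (hθp : θ ≠ p)
    (x y z : ℤ) (hx : x ≠ 0) (hy : y ≠ 0) (hz : z ≠ 0)
    (hxy : IsCoprime x y) (hyz : IsCoprime y z) (hxz : IsCoprime x z)
    (hfermat : x ^ p + y ^ p = z ^ p)
    (hNC : ∀ a b : ZMod θ, a ≠ 0 → b ≠ 0 → b ^ p ≠ a ^ p + 1)
    (hpNp : ∀ c : ZMod θ, c ^ p ≠ (p : ZMod θ))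
    (hNpinv : ∀ a b : ZMod θ, a ≠ 0 → b ≠ 0 → (p : ZMod θ) * (a ^ p - b ^ p) ≠ 1)
    (hθz : (θ:ℤ) ∣ z) :
    (p:ℤ)^(2*p-1) * (θ:ℤ)^p ∣ x + y := by
  haveI : Fact θ.Prime := ⟨hθ⟩
  have hpZ : Prime (p:ℤ) := Nat.prime_iff_prime_int.mp hp
  have hθZ : Prime (θ:ℤ) := Nat.prime_iff_prime_int.mp hθ
  have hp3 : 3 ≤ p := by
    obtain ⟨k, hk⟩ := hpodd
    have := hp.two_le
    omega
  by_cases hθxy : (θ:ℤ) ∣ x + y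
  · -- Case T2 : θ ∣ x + y
    -- first : p ∣ z
    have hpz : (p:ℤ) ∣ z := by
      by_contra hpz
      by_cases hpy : (p:ℤ) ∣ y
      · have hpx : ¬ (p:ℤ) ∣ x := not_dvd_int_of_coprime hp hxy hpy
        exact T2aux p θ hp hpodd hθ hθp y x z hy hx hz hxy.symm hxz hyz
          (by linarith) hpNp hθz (by rwa [add_comm]) hpx hpz
      · exact T2aux p θ hp hpodd hθ hθp x y z hx hy hz hxy hyz hxz hfermat hpNp hθz hθxy hpy hpz
    have hpx : ¬ (p:ℤ) ∣ x := not_dvd_of_coprime hp hxz hpz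
    have hpy : ¬ (p:ℤ) ∣ y := not_dvd_of_coprime hp hyz hpz
    have hEz := master1 p hpodd x y z hfermat
    have hEx := master2 p x y z hfermat
    have hEy := master3 p x y z hfermat
    have hθx : ¬ (θ:ℤ) ∣ x := not_dvd_of_coprime hθ hxz hθz
    have hP0 : ((p : ℕ) : ZMod θ) ≠ 0 := by
      intro h
      have := (ZMod.natCast_eq_zero_iff p θ).mp h
      rcases (Nat.prime_dvd_prime_iff_eq hθ hp).mp this with rfl
      exact hθp rfl
    have hX0 : ((x : ℤ) : ZMod θ) ≠ 0 := fun h => hθx ((ZMod.intCast_zmod_eq_zero_iff_dvd x θ).mp h)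
    have hYX : ((y : ℤ) : ZMod θ) = -((x : ℤ) : ZMod θ) := by
      have h1 : ((x + y : ℤ) : ZMod θ) = 0 := (ZMod.intCast_zmod_eq_zero_iff_dvd (x+y) θ).mpr hθxy
      push_cast at h1
      linear_combination h1
    -- θ does not divide G p x (-y)
    have hGcast : ((G p x (-y) : ℤ) : ZMod θ) = ((p:ℕ) : ZMod θ) * ((x : ℤ) : ZMod θ) ^ (p-1) := by
      rw [G_cast]
      push_cast
      rw [hYX]
      simp only [neg_neg]
      rw [diag_sum]
    have hθG : ¬ (θ:ℤ) ∣ G p x (-y) := by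
      intro h
      have h0 : ((G p x (-y) : ℤ) : ZMod θ) = 0 := (ZMod.intCast_zmod_eq_zero_iff_dvd _ θ).mpr h
      rw [hGcast] at h0
      rcases mul_eq_zero.mp h0 with h3 | h3
      · exact hP0 h3
      · exact pow_ne_zero _ hX0 h3
    -- θ^p ∣ x + y
    have hθppart : (θ:ℤ)^p ∣ x + y := by
      have h1 : (θ:ℤ)^p ∣ z^p := pow_dvd_pow_of_dvd hθz p
      rw [← hEz] at h1
      have hcopθG : IsCoprime ((θ:ℤ)^p) (G p x (-y)) := by
        apply IsCoprime.pow_left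
        apply coprime_of_prime
        intro q hq h2 h3
        exact hθG (prime_dvd_natprime hq hθ h2 h3)
      exact hcopθG.dvd_of_dvd_mul_right h1
    -- p-part
    have hab : (p:ℤ) ∣ x - -y := by
      rw [sub_neg_eq_add]
      obtain ⟨a1, e1⟩ := flt_int p hp x
      obtain ⟨a2, e2⟩ := flt_int p hp y
      obtain ⟨a3, e3⟩ := dvd_pow hpz hp.pos.ne' (n := p)
      exact ⟨a3 - a1 - a2, by linarith⟩
    have h2xy : ∀ q : ℤ, Prime q → q ∣ x - -y → q ∣ -y → False := by
      intro q hq h1 h2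
      rw [sub_neg_eq_add] at h1
      have hqy : q ∣ y := (dvd_neg).mp h2
      have hqx : q ∣ x := by obtain ⟨c1, e1⟩ := h1; obtain ⟨c2, e2⟩ := hqy; exact ⟨c1 - c2, by linarith⟩
      exact hq.not_unit (hxy.isUnit_of_dvd' hqx hqy)
    have hEz' : (x - -y) * G p x (-y) = z ^ p := by rw [sub_neg_eq_add]; exact hEz
    have hpy' : ¬ (p:ℤ) ∣ -y := fun h => hpy (dvd_neg.mp h)
    obtain ⟨e', v, w, hCv, hv, he'1, hw, hpow⟩ := decomp p hp hpodd hEz' hz hab hpy' h2xy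
    rw [sub_neg_eq_add] at hpow
    have hp2xy : (p:ℤ)^2 ∣ x + y := by
      refine dvd_trans (pow_dvd_pow _ ?_) hpow
      have h1 : 3 * 1 ≤ p * e' := Nat.mul_le_mul hp3 he'1
      omega
    -- extractions s, t
    have hpzy : ¬ (p:ℤ) ∣ z - y := by
      intro h
      obtain ⟨a1, e1⟩ := h
      obtain ⟨a2, e2⟩ := hpz
      exact hpy ⟨a2 - a1, by linarith⟩
    have h2zy : ∀ q : ℤ, Prime q → q ∣ z - y → q ∣ y → False := by
      intro q hq h1 h2
      have hqz : q ∣ z := by obtain ⟨c1, e1⟩ := h1; obtain ⟨c2, e2⟩ := h2; exact ⟨c1 + c2, by linarith⟩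
      exact hq.not_unit (hyz.isUnit_of_dvd' h2 hqz)
    have hcop2 : IsCoprime (z - y) (G p z y) := cop_G' p hp dvd_rfl dvd_rfl hpzy h2zy
    obtain ⟨s, hs⟩ := Int.eq_pow_of_mul_eq_pow_odd_left hcop2 hpodd hEx
    have hpzx : ¬ (p:ℤ) ∣ z - x := by
      intro h
      obtain ⟨a1, e1⟩ := h
      obtain ⟨a2, e2⟩ := hpz
      exact hpx ⟨a2 - a1, by linarith⟩
    have h2zx : ∀ q : ℤ, Prime q → q ∣ z - x → q ∣ x → False := by
      intro q hq h1 h2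
      have hqz : q ∣ z := by obtain ⟨c1, e1⟩ := h1; obtain ⟨c2, e2⟩ := h2; exact ⟨c1 + c2, by linarith⟩
      exact hq.not_unit (hxz.isUnit_of_dvd' h2 hqz)
    have hcop3 : IsCoprime (z - x) (G p z x) := cop_G' p hp dvd_rfl dvd_rfl hpzx h2zx
    obtain ⟨t, ht⟩ := Int.eq_pow_of_mul_eq_pow_odd_left hcop3 hpodd hEy
    -- p ∣ s + t
    have hpxy2 : (p:ℤ) ∣ x + y := by rw [← sub_neg_eq_add x y]; exact hab
    have hst : (p:ℤ) ∣ s + t := by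
      obtain ⟨a1, e1⟩ := flt_int p hp s
      obtain ⟨a2, e2⟩ := flt_int p hp t
      obtain ⟨a3, e3⟩ := hpz
      obtain ⟨a4, e4⟩ := hpxy2
      refine ⟨-a1 - a2 + 2*a3 - a4, ?_⟩
      have e5 : s ^ p = z - y := hs.symm
      have e6 : t ^ p = z - x := ht.symm
      linarith
    have hst2 : (p:ℤ)^2 ∣ s^p + t^p := by
      have h1 : ((p:ℕ):ℤ) ∣ s - (-t) := by rw [sub_neg_eq_add]; exact hst
      have h2 := dvd_sub_pow_of_dvd_sub h1 1
      rw [pow_one] at h2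
      rw [Odd.neg_pow hpodd, sub_neg_eq_add] at h2
      exact_mod_cast h2
    have h2z : (p:ℤ)^2 ∣ 2*z := by
      have h1 : 2*z = (s^p + t^p) + (x+y) := by
        have e5 : s ^ p = z - y := hs.symm
        have e6 : t ^ p = z - x := ht.symm
        linarith
      rw [h1]
      exact dvd_add hst2 hp2xy
    have hp2z : (p:ℤ)^2 ∣ z := by
      have hcop4 : IsCoprime ((p:ℤ)^2) 2 := by
        apply IsCoprime.pow_left
        apply coprime_of_prime
        intro q hq h1 h2
        have h3 : (p:ℤ) ∣ 2 := prime_dvd_natprime hq hp h1 h2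
        have h4 : (p:ℕ) ∣ 2 := by exact_mod_cast h3
        have := Nat.le_of_dvd (by norm_num) h4
        omega
      exact hcop4.dvd_of_dvd_mul_left h2z
    have he'2 : 2 ≤ e' := by
      by_contra hcon
      have he1 : e' = 1 := by omega
      rw [he1, pow_one] at hCv
      obtain ⟨c, hc⟩ := hp2z
      rw [hCv] at hc
      apply hv
      refine ⟨c, ?_⟩
      have hpne : (p:ℤ) ≠ 0 := by exact_mod_cast hp.pos.ne'
      apply mul_left_cancel₀ hpne
      rw [hc]; ring
    have hfinal : 2*p - 1 ≤ p*e' - 1 := by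
      have h1 : p*2 ≤ p*e' := Nat.mul_le_mul_left p he'2
      omega
    have hpdvd : (p:ℤ)^(2*p-1) ∣ x + y := (pow_dvd_pow _ hfinal).trans hpow
    have hcopfin : IsCoprime ((p:ℤ)^(2*p-1)) ((θ:ℤ)^p) := by
      apply IsCoprime.pow
      rw [Int.isCoprime_iff_gcd_eq_one]
      simpa using (Nat.coprime_primes hp hθ).mpr (fun h => hθp h.symm)
    exact hcopfin.mul_dvd hpdvd hθppart
  · -- Case T1 : θ ∤ x + y : impossible
    exfalso
    by_cases hpz : (p:ℤ) ∣ z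
    · exact T1pz p θ hp hpodd hθ hθp x y z hx hy hz hxy hyz hxz hfermat hNpinv hθz hθxy hpz
    · by_cases hpx : (p:ℤ) ∣ x
      · exact T1px p θ hp hpodd hθ hθp x y z hx hy hz hxy hyz hxz hfermat hNpinv hθz hθxy hpx
      · by_cases hpy : (p:ℤ) ∣ y
        · exact T1px p θ hp hpodd hθ hθp y x z hy hx hz hxy.symm hxz hyz
            (by linarith) hNpinv hθz (by rwa [add_comm]) hpy
        · exact T1none p θ hp hpodd hθ hθp x y z hx hy hz hxy hyz hxz hfermat hNC hθz hθxy
            hpx hpy hpz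



end GermainAux

open GermainAux

/-- Germain's Large Size of Solutions theorem (corrected with the N-p⁻¹
condition from her erratum): if θ satisfies Conditions N-C, p-N-p, and
N-p⁻¹ for p, then one of x + y, z − y, z − x is divisible by
p^(2p−1)·θ^p. -/
theorem large_size_of_solutions
    (p θ : ℕ) (hp : p.Prime) (hpodd : Odd p) (hθ : θ.Prime)
    (x y z : ℤ) (hx : x ≠ 0) (hy : y ≠ 0) (hz : z ≠ 0)
    (hxy : IsCoprime x y) (hyz : IsCoprime y z) (hxz : IsCoprime x z)
    (hfermat : x ^ p + y ^ p = z ^ p)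
    (hNC : ¬ ∃ a b : ℤ, ¬ (θ : ℤ) ∣ a ∧ ¬ (θ : ℤ) ∣ b ∧ b ^ p ≡ a ^ p + 1 [ZMOD (θ : ℤ)])
    (hpNp : ¬ ∃ c : ℤ, c ^ p ≡ (p : ℤ) [ZMOD (θ : ℤ)])
    (hNpinv : ¬ ∃ a b : ℤ, ¬ (θ : ℤ) ∣ a ∧ ¬ (θ : ℤ) ∣ b ∧
      (p : ℤ) * (a ^ p - b ^ p) ≡ 1 [ZMOD (θ : ℤ)]) :
    (p : ℤ) ^ (2 * p - 1) * (θ : ℤ) ^ p ∣ x + y ∨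
    (p : ℤ) ^ (2 * p - 1) * (θ : ℤ) ^ p ∣ z - y ∨
    (p : ℤ) ^ (2 * p - 1) * (θ : ℤ) ^ p ∣ z - x := by
  haveI : Fact θ.Prime := ⟨hθ⟩
  -- θ ≠ p
  have hθp : θ ≠ p := by
    rintro rfl
    apply hpNp
    refine ⟨(θ:ℤ), ?_⟩
    rw [Int.modEq_iff_dvd]
    refine ⟨1 - (θ:ℤ)^(θ-1), ?_⟩
    have h1 : (θ:ℤ)^θ = (θ:ℤ) * (θ:ℤ)^(θ-1) := by
      rw [← pow_succ']
      congr 1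
      have := hθ.two_le
      omega
    rw [h1]; ring
  -- translated conditions
  have hNC' : ∀ a b : ZMod θ, a ≠ 0 → b ≠ 0 → b ^ p ≠ a ^ p + 1 := by
    intro a b ha hb h
    apply hNC
    refine ⟨(ZMod.cast a : ℤ), (ZMod.cast b : ℤ), ?_, ?_, ?_⟩
    · intro hdvd
      apply ha
      rw [← ZMod.intCast_zmod_cast a]
      exact (ZMod.intCast_zmod_eq_zero_iff_dvd _ θ).mpr hdvd
    · intro hdvd
      apply hb
      rw [← ZMod.intCast_zmod_cast b]
      exact (ZMod.intCast_zmod_eq_zero_iff_dvd _ θ).mpr hdvd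
    · apply (ZMod.intCast_eq_intCast_iff _ _ _).mp
      rw [Int.cast_pow, Int.cast_add, Int.cast_pow, Int.cast_one,
        ZMod.intCast_zmod_cast, ZMod.intCast_zmod_cast]
      exact h
  have hpNp' : ∀ c : ZMod θ, c ^ p ≠ (p : ZMod θ) := by
    intro c h
    apply hpNp
    refine ⟨(ZMod.cast c : ℤ), ?_⟩
    apply (ZMod.intCast_eq_intCast_iff _ _ _).mp
    rw [Int.cast_pow, ZMod.intCast_zmod_cast, Int.cast_natCast]
    exact h
  have hNpinv' : ∀ a b : ZMod θ, a ≠ 0 → b ≠ 0 → (p : ZMod θ) * (a ^ p - b ^ p) ≠ 1 := by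
    intro a b ha hb h
    apply hNpinv
    refine ⟨(ZMod.cast a : ℤ), (ZMod.cast b : ℤ), ?_, ?_, ?_⟩
    · intro hdvd
      apply ha
      rw [← ZMod.intCast_zmod_cast a]
      exact (ZMod.intCast_zmod_eq_zero_iff_dvd _ θ).mpr hdvd
    · intro hdvd
      apply hb
      rw [← ZMod.intCast_zmod_cast b]
      exact (ZMod.intCast_zmod_eq_zero_iff_dvd _ θ).mpr hdvd
    · apply (ZMod.intCast_eq_intCast_iff _ _ _).mp
      rw [Int.cast_mul, Int.cast_sub, Int.cast_pow, Int.cast_pow, Int.cast_one,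
        Int.cast_natCast, ZMod.intCast_zmod_cast, ZMod.intCast_zmod_cast]
      exact h
  -- θ divides one of x, y, z
  have hθxyz : (θ:ℤ) ∣ x ∨ (θ:ℤ) ∣ y ∨ (θ:ℤ) ∣ z := by
    by_contra hcon
    push_neg at hcon
    obtain ⟨h1, h2, h3⟩ := hcon
    have hX0 : ((x : ℤ) : ZMod θ) ≠ 0 := fun h => h1 ((ZMod.intCast_zmod_eq_zero_iff_dvd x θ).mp h)
    have hY0 : ((y : ℤ) : ZMod θ) ≠ 0 := fun h => h2 ((ZMod.intCast_zmod_eq_zero_iff_dvd y θ).mp h)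
    have hZ0 : ((z : ℤ) : ZMod θ) ≠ 0 := fun h => h3 ((ZMod.intCast_zmod_eq_zero_iff_dvd z θ).mp h)
    have heq : ((x : ℤ) : ZMod θ)^p + ((y : ℤ) : ZMod θ)^p = ((z : ℤ) : ZMod θ)^p := by
      have h4 : ((x ^ p + y ^ p : ℤ) : ZMod θ) = ((z ^ p : ℤ) : ZMod θ) := by rw [hfermat]
      push_cast at h4
      exact h4
    apply hNC' (((x : ℤ) : ZMod θ) * ((y : ℤ) : ZMod θ)⁻¹) (((z : ℤ) : ZMod θ) * ((y : ℤ) : ZMod θ)⁻¹)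
      (mul_ne_zero hX0 (inv_ne_zero hY0)) (mul_ne_zero hZ0 (inv_ne_zero hY0))
    have hone : ((y : ℤ) : ZMod θ) ^ p * (((y : ℤ) : ZMod θ)⁻¹) ^ p = 1 := by
      rw [← mul_pow, mul_inv_cancel₀ hY0, one_pow]
    calc (((z : ℤ) : ZMod θ) * ((y : ℤ) : ZMod θ)⁻¹) ^ p
        = ((z : ℤ) : ZMod θ) ^ p * (((y : ℤ) : ZMod θ)⁻¹) ^ p := by ring
      _ = (((x : ℤ) : ZMod θ)^p + ((y : ℤ) : ZMod θ)^p) * (((y : ℤ) : ZMod θ)⁻¹) ^ p := by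
          rw [heq]
      _ = (((x : ℤ) : ZMod θ) * ((y : ℤ) : ZMod θ)⁻¹) ^ p
            + ((y : ℤ) : ZMod θ) ^ p * (((y : ℤ) : ZMod θ)⁻¹) ^ p := by ring
      _ = (((x : ℤ) : ZMod θ) * ((y : ℤ) : ZMod θ)⁻¹) ^ p + 1 := by rw [hone]
  rcases hθxyz with hθx | hθy | hθz
  · -- θ ∣ x : apply key to (z, -y, x) : conclusion about z - y
    right; left
    have hfermat' : z ^ p + (-y) ^ p = x ^ p := by
      rw [Odd.neg_pow hpodd]; linarith
    have hres := key p θ hp hpodd hθ hθp z (-y) x hz (neg_ne_zero.mpr hy) hx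
      hyz.symm.neg_right hxy.symm.neg_left hxz.symm hfermat' hNC' hpNp' hNpinv' hθx
    rwa [← sub_eq_add_neg] at hres
  · -- θ ∣ y : apply key to (z, -x, y) : conclusion about z - x
    right; right
    have hfermat' : z ^ p + (-x) ^ p = y ^ p := by
      rw [Odd.neg_pow hpodd]; linarith
    have hres := key p θ hp hpodd hθ hθp z (-x) y hz (neg_ne_zero.mpr hx) hy
      hxz.symm.neg_right hxy.neg_left hyz.symm hfermat' hNC' hpNp' hNpinv' hθy
    rwa [← sub_eq_add_neg] at hres
  · -- θ ∣ z
    left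
    exact key p θ hp hpodd hθ hθp x y z hx hy hz hxy hyz hxz hfermat hNC' hpNp' hNpinv' hθz
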